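/- arXiv:2002.08027 — 2 statements merged into one kernel-verified Lean document; each statement's English description precedes it below -/
import Mathlib

section
/- Suppose F : ℕ → ℝ, Q : ℕ → ℝ≥0, and constants B ≥ 0, K > 0, p* ∈ ℝ satisfy, for all t: (Q(t+1)^2 - Q(t)^2)/2 + K·F(t) ≤ B + K·p* + Q(t)·(a(t) - s(t)) with a(t) ≤ s(t) and Q(0) = 0. Then for all t ≥ 1, (1/t)·Σ_{τ=0}^{t-1} F(τ) ≤ p* + B/K. -/
/-- Deterministic core of Theorem 1 (cost-optimality gap): the drift-plus-penalty
inequality together with `a τ ≤ s τ` implies the time-average penalty is within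
`B / K` of `pstar`. -/
theorem dmra_cost_gap (F Q a s : ℕ → ℝ) (B K pstar : ℝ)
    (hQnn : ∀ t, 0 ≤ Q t) (hQ0 : Q 0 = 0) (hB : 0 ≤ B) (hK : 0 < K)
    (hdrift : ∀ t, (Q (t + 1) ^ 2 - Q t ^ 2) / 2 + K * F t
        ≤ B + K * pstar + Q t * (a t - s t))
    (has : ∀ t, a t ≤ s t) :
    ∀ t : ℕ, 1 ≤ t →
      (1 / (t : ℝ)) * ∑ τ ∈ Finset.range t, F τ ≤ pstar + B / K := by
  intro t ht
  have htpos : (0:ℝ) < t := by exact_mod_cast ht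
  have key : K * ∑ τ ∈ Finset.range t, F τ ≤ t * (B + K * pstar) := by
    have hsum : ∑ τ ∈ Finset.range t,
        ((Q (τ + 1) ^ 2 - Q τ ^ 2) / 2 + K * F τ)
        ≤ ∑ τ ∈ Finset.range t, (B + K * pstar) := by
      apply Finset.sum_le_sum
      intro τ _
      have h1 := hdrift τ
      have h2 : Q τ * (a τ - s τ) ≤ 0 :=
        mul_nonpos_of_nonneg_of_nonpos (hQnn τ) (by linarith [has τ])
      linarith
    rw [Finset.sum_add_distrib, ← Finset.mul_sum, Finset.sum_const,
      nsmul_eq_mul, Finset.card_range] at hsum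
    have htel : ∑ τ ∈ Finset.range t, (Q (τ + 1) ^ 2 - Q τ ^ 2) / 2
        = (Q t ^ 2 - Q 0 ^ 2) / 2 := by
      rw [← Finset.sum_div, Finset.sum_range_sub (fun n => Q n ^ 2)]
    rw [htel, hQ0] at hsum
    nlinarith [sq_nonneg (Q t)]
  have hBK : K * (B / K) = B := by field_simp
  rw [one_div, inv_mul_le_iff₀ htpos]
  nlinarith [key]
end

section
/- Suppose Q : ℕ → ℝ≥0 with Q(0) = 0, F : ℕ → ℝ with F(t) ≥ p_min for all t, and constants B ≥ 0, K > 0, Δ > 0, p* ∈ ℝ satisfy, for all t: (Q(t+1)^2 - Q(t)^2)/2 + K·F(t) ≤ B + K·p* - Δ·Q(t). Then for all t ≥ 1, (1/t)·Σ_{τ=0}^{t-1} Q(τ) ≤ (B + K·(p* - p_min))/Δ. -/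
/-- Deterministic core of Theorem 2 (bounded average queue length) under the
Slater condition. -/
theorem dmra_queue_bound (F Q : ℕ → ℝ) (B K Δ pstar pmin : ℝ)
    (hQnn : ∀ t, 0 ≤ Q t) (hQ0 : Q 0 = 0)
    (hF : ∀ t, pmin ≤ F t) (hB : 0 ≤ B) (hK : 0 < K) (hΔ : 0 < Δ)
    (hdrift : ∀ t, (Q (t + 1) ^ 2 - Q t ^ 2) / 2 + K * F t
        ≤ B + K * pstar - Δ * Q t) :
    ∀ t : ℕ, 1 ≤ t →
      (1 / (t : ℝ)) * ∑ τ ∈ Finset.range t, Q τ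
        ≤ (B + K * (pstar - pmin)) / Δ := by
  intro t ht
  have htR : (0:ℝ) < t := by exact_mod_cast ht
  have hsum : ∀ τ ∈ Finset.range t,
      Δ * Q τ ≤ (B + K * (pstar - pmin)) - ((Q (τ+1))^2 - (Q τ)^2)/2 := by
    intro τ _
    have h1 := hdrift τ
    have h2 : K * pmin ≤ K * F τ := by
      exact mul_le_mul_of_nonneg_left (hF τ) hK.le
    nlinarith
  have hs := Finset.sum_le_sum hsum
  rw [Finset.sum_sub_distrib] at hs
  have htel : ∑ τ ∈ Finset.range t, ((Q (τ+1))^2 - (Q τ)^2)/2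
      = ((Q t)^2 - (Q 0)^2)/2 := by
    rw [← Finset.sum_div, Finset.sum_range_sub (fun i => (Q i)^2)]
  rw [htel, Finset.sum_const, Finset.card_range, ← Finset.mul_sum] at hs
  have hq : 0 ≤ (Q t)^2 := sq_nonneg _
  have hQsum : Δ * ∑ τ ∈ Finset.range t, Q τ ≤ t * (B + K * (pstar - pmin)) := by
    rw [hQ0, nsmul_eq_mul] at hs
    nlinarith [hs]
  rw [one_div_mul_eq_div, div_le_div_iff₀ htR hΔ]
  nlinarith [hQsum]
end
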